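/- Let A = [[1, h√η], [0, η]] and L = √(1-η) [[h, 0], [√η, 1]] be 2×2 real matrices with h > 0 and η ∈ (0,1) (here η = e^{-γh}). Then the n-step controllability Gramian Σ_n = Σ_{k=0}^{n-1} Aᵏ L Lᵀ (Aᵀ)ᵏ has entries σ^{xx}_n = h²(1-η)^{-2}[(1-η²)n - 4η(1-η^n) + η(1-η^{2n})], σ^{xv}_n = h√η(1-η)^{-1}(1-η^n)², and σ^{vv}_n = 1 - η^{2n}, and its determinant equals h²(1-η)^{-2}[(1-η²)(1-η^{2n})n - 4η(1-η^n)²]. -/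

import Mathlib

open Matrix Finset

theorem obabo_gramian_entries (γ h : ℝ) (hγ : 0 < γ) (hh : 0 < h) (n : ℕ)
    (η : ℝ) (hη : η = Real.exp (-γ * h))
    (A L : Matrix (Fin 2) (Fin 2) ℝ)
    (hA : A = !![1, h * Real.sqrt η; 0, η])
    (hL : L = Real.sqrt (1 - η) • !![h, 0; Real.sqrt η, 1])
    (Gram : Matrix (Fin 2) (Fin 2) ℝ)
    (hGram : Gram = ∑ k ∈ Finset.range n, A ^ k * L * Lᵀ * (Aᵀ) ^ k) :
    Gram 0 0 = h ^ 2 / (1 - η) ^ 2 *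
        ((1 - η ^ 2) * n - 4 * η * (1 - η ^ n) + η * (1 - η ^ (2 * n))) ∧
      Gram 0 1 = h * Real.sqrt η / (1 - η) * (1 - η ^ n) ^ 2 ∧
      Gram 1 0 = h * Real.sqrt η / (1 - η) * (1 - η ^ n) ^ 2 ∧
      Gram 1 1 = 1 - η ^ (2 * n) ∧
      Gram.det = h ^ 2 / (1 - η) ^ 2 *
        ((1 - η ^ 2) * (1 - η ^ (2 * n)) * n - 4 * η * (1 - η ^ n) ^ 2) := by
  have hη0 : 0 < η := by rw [hη]; exact Real.exp_pos _
  have hη1 : η < 1 := by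
    rw [hη, Real.exp_lt_one_iff]
    nlinarith
  have hne : (1 : ℝ) - η ≠ 0 := sub_ne_zero.mpr hη1.ne'
  have hs : Real.sqrt η ^ 2 = η := Real.sq_sqrt hη0.le
  have ht : Real.sqrt (1 - η) ^ 2 = 1 - η := Real.sq_sqrt (by linarith)
  set s : ℝ := Real.sqrt η with hsdef
  set t : ℝ := Real.sqrt (1 - η) with htdef
  have hLT : Lᵀ = t • !![h, s; 0, 1] := by
    subst hL
    ext i j
    fin_cases i <;> fin_cases j <;>
      simp [Matrix.transpose_apply, Matrix.smul_apply]
  have hLL : L * Lᵀ = !![(1 - η) * h ^ 2, (1 - η) * (h * s);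
      (1 - η) * (h * s), (1 - η) * (η + 1)] := by
    rw [hLT, hL]
    ext i j
    fin_cases i <;> fin_cases j <;>
      simp [Matrix.mul_apply, Fin.sum_univ_two, Matrix.smul_apply,
        Matrix.transpose_apply] <;>
      first
        | linear_combination (h ^ 2) * ht
        | linear_combination (h * s) * ht
        | linear_combination (s ^ 2 + 1) * ht + (1 - η) * hs
  have key : ∀ m : ℕ, (∑ k ∈ Finset.range (m + 1), A ^ k * L * Lᵀ * (Aᵀ) ^ k)
      = L * Lᵀ + A * (∑ k ∈ Finset.range m, A ^ k * L * Lᵀ * (Aᵀ) ^ k) * Aᵀ := by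
    intro m
    rw [Finset.sum_range_succ']
    simp only [pow_zero, one_mul, mul_one]
    rw [add_comm]
    congr 1
    rw [Finset.mul_sum, Finset.sum_mul]
    refine Finset.sum_congr rfl fun k _ => ?_
    rw [pow_succ', pow_succ]
    noncomm_ring
  have hne' : (1 : ℝ) - s ^ 2 ≠ 0 := by rw [hs]; exact hne
  have hAT : Aᵀ = !![1, 0; h * s, η] := by
    subst hA
    ext i j
    fin_cases i <;> fin_cases j <;> simp [Matrix.transpose_apply]
  subst hGram
  induction n with
  | zero =>
    norm_num [Matrix.det_fin_two]
  | succ n ih =>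
    obtain ⟨i00, i01, i10, i11, -⟩ := ih
    set S := ∑ k ∈ Finset.range n, A ^ k * L * Lᵀ * (Aᵀ) ^ k with hSdef
    have e00 : (∑ k ∈ Finset.range (n + 1), A ^ k * L * Lᵀ * (Aᵀ) ^ k) 0 0
        = h ^ 2 / (1 - η) ^ 2 * ((1 - η ^ 2) * (n + 1 : ℕ)
          - 4 * η * (1 - η ^ (n + 1)) + η * (1 - η ^ (2 * (n + 1)))) := by
      rw [key n, ← hSdef]
      simp only [Matrix.add_apply, Matrix.mul_apply, Fin.sum_univ_two, hLL, hA,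
        hAT, Matrix.cons_val_zero, Matrix.cons_val_one, Matrix.head_cons,
        Matrix.head_fin_const, Matrix.cons_val', Matrix.cons_val_fin_one,
        Matrix.empty_val', Matrix.of_apply, Matrix.transpose_apply]
      rw [i00, i01, i10, i11]
      push_cast
      try rw [show η = s ^ 2 from hs.symm]
      try field_simp
      try ring
    have e01 : (∑ k ∈ Finset.range (n + 1), A ^ k * L * Lᵀ * (Aᵀ) ^ k) 0 1
        = h * s / (1 - η) * (1 - η ^ (n + 1)) ^ 2 := by
      rw [key n, ← hSdef]
      simp only [Matrix.add_apply, Matrix.mul_apply, Fin.sum_univ_two, hLL, hA,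
        hAT, Matrix.cons_val_zero, Matrix.cons_val_one, Matrix.head_cons,
        Matrix.head_fin_const, Matrix.cons_val', Matrix.cons_val_fin_one,
        Matrix.empty_val', Matrix.of_apply, Matrix.transpose_apply]
      rw [i00, i01, i10, i11]
      try rw [show η = s ^ 2 from hs.symm]
      try field_simp
      try ring
    have e10 : (∑ k ∈ Finset.range (n + 1), A ^ k * L * Lᵀ * (Aᵀ) ^ k) 1 0
        = h * s / (1 - η) * (1 - η ^ (n + 1)) ^ 2 := by
      rw [key n, ← hSdef]
      simp only [Matrix.add_apply, Matrix.mul_apply, Fin.sum_univ_two, hLL, hA,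
        hAT, Matrix.cons_val_zero, Matrix.cons_val_one, Matrix.head_cons,
        Matrix.head_fin_const, Matrix.cons_val', Matrix.cons_val_fin_one,
        Matrix.empty_val', Matrix.of_apply, Matrix.transpose_apply]
      rw [i00, i01, i10, i11]
      try rw [show η = s ^ 2 from hs.symm]
      try field_simp
      try ring
    have e11 : (∑ k ∈ Finset.range (n + 1), A ^ k * L * Lᵀ * (Aᵀ) ^ k) 1 1
        = 1 - η ^ (2 * (n + 1)) := by
      rw [key n, ← hSdef]
      simp only [Matrix.add_apply, Matrix.mul_apply, Fin.sum_univ_two, hLL, hA,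
        hAT, Matrix.cons_val_zero, Matrix.cons_val_one, Matrix.head_cons,
        Matrix.head_fin_const, Matrix.cons_val', Matrix.cons_val_fin_one,
        Matrix.empty_val', Matrix.of_apply, Matrix.transpose_apply]
      rw [i00, i01, i10, i11]
      try rw [show η = s ^ 2 from hs.symm]
      try field_simp
      try ring
    refine ⟨e00, e01, e10, e11, ?_⟩
    rw [Matrix.det_fin_two, e00, e01, e10, e11]
    push_cast
    rw [show η = s ^ 2 from hs.symm]
    field_simp
    ring
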